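/- The covering number of the Lebesgue null ideal is at most the uniformity of the meager ideal of ℝ: the least cardinality of a family of Lebesgue null subsets of ℝ whose union is all of ℝ is less than or equal to the least cardinality of a non-meager subset of ℝ. -/
import Mathlib

open Cardinal Set MeasureTheory Pointwise

/-- The covering number of the Lebesgue null ideal of ℝ. -/
noncomputable def covNull : Cardinal :=
  sInf {c : Cardinal | ∃ F : Set (Set ℝ),
    (∀ s ∈ F, MeasureTheory.volume s = 0) ∧ ⋃₀ F = Set.univ ∧ c = #F}

/-- The uniformity of the meager ideal of ℝ: least cardinality of a non-meager set. -/
noncomputable def unifMeagerReal : Cardinal :=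
  sInf {c : Cardinal | ∃ S : Set ℝ, ¬ IsMeagre S ∧ c = #S}

theorem covNull_le_unifMeagerReal : covNull ≤ unifMeagerReal := by
  -- get a comeager null set E
  obtain ⟨E, hEres, T, hTae, hdisj⟩ :=
    Filter.disjoint_iff.mp Real.disjoint_residual_ae
  have hEnull : volume E = 0 := by
    have hsub : E ⊆ Tᶜ := fun x hx hxT => (Set.disjoint_left.mp hdisj hx) hxT
    exact measure_mono_null hsub (mem_ae_iff.mp hTae)
  apply le_csInf
  · refine ⟨#(Set.univ : Set ℝ), Set.univ, fun h => ?_, rfl⟩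
    have : (∅ : Set ℝ) ∈ residual ℝ := by
      simpa [IsMeagre, Set.compl_univ] using h
    exact ((dense_of_mem_residual this).nonempty).elim fun x hx => hx
  rintro c ⟨X, hX, rfl⟩
  have key : covNull ≤ #((fun x : ℝ => x +ᵥ E) '' X) := by
    refine csInf_le' ⟨(fun x : ℝ => x +ᵥ E) '' X, ?_, ?_, rfl⟩
    · rintro s ⟨x, -, rfl⟩
      rw [measure_vadd]; exact hEnull
    · apply Set.eq_univ_of_forall
      intro z
      have hres : ((Homeomorph.subLeft z) ⁻¹' E) ∈ residual ℝ := by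
        have := (Homeomorph.subLeft z).residual_map_eq
        rw [← this] at hEres
        exact hEres
      have hne : (X ∩ (Homeomorph.subLeft z) ⁻¹' E).Nonempty := by
        by_contra hcon
        apply hX
        have hm : IsMeagre ((Homeomorph.subLeft z ⁻¹' E)ᶜ) := by
          show ((Homeomorph.subLeft z ⁻¹' E)ᶜ)ᶜ ∈ residual ℝ
          rwa [compl_compl]
        exact hm.mono (Set.subset_compl_iff_disjoint_right.mpr
          (Set.disjoint_iff_inter_eq_empty.mpr (Set.not_nonempty_iff_eq_empty.mp hcon)))
      obtain ⟨x, hxX, hxE⟩ := hne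
      refine Set.mem_sUnion.mpr ⟨x +ᵥ E, ⟨x, hxX, rfl⟩, ?_⟩
      refine ⟨z - x, hxE, by simp⟩
  exact key.trans (Cardinal.mk_image_le)
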